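/- arXiv:1201.5495 — 2 statements merged into one kernel-verified Lean document; each statement's English description precedes it below -/
import Mathlib

section
/- Let (P, ≤) be a well-founded partial order, α an ordinal, and suppose P is a sum-augmentation of partial orders (B₁, …, Bₙ). If rank(P) = ω^α, then rank(Bᵢ) = ω^α for some i ∈ {1, …, n}. In other words, the ordinals of the form ω^α are rank-sum-indecomposable for the class of well-founded partial orders. -/
open Ordinal


universe u

/-- The ordinal rank of an element of a well-founded partial order:
`rank p = sup { rank p' + 1 | p' < p }`. -/
noncomputable def elRank {P : Type u} [PartialOrder P] [WellFoundedLT P] (p : P) :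
    Ordinal.{u} :=
  IsWellFounded.rank (α := P) (· < ·) p

/-- The ordinal rank of a well-founded partial order:
`rank P = sup { rank p + 1 | p ∈ P }` (with `sup ∅ = 0`). -/
noncomputable def ordRank (P : Type u) [PartialOrder P] [WellFoundedLT P] : Ordinal.{u} :=
  ⨆ p : P, elRank p + 1

/-- `A` is a sum-augmentation of `(B 0, …, B (n-1))`: the domain of `A` can be partitioned
into `n` parts such that the suborder induced on the `i`-th part is order-isomorphic
to `B i`. -/
def SumAugmentation {n : ℕ} (A : Type u) [PartialOrder A] (B : Fin n → Type u)
    [∀ i, PartialOrder (B i)] : Prop :=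
  ∃ f : A → Fin n, ∀ i : Fin n, Nonempty ({a : A // f a = i} ≃o B i)

namespace Ordinal

noncomputable def nadd : Ordinal.{u} → Ordinal.{u} → Ordinal.{u}
  | a, b => max (⨆ x : Set.Iio a, Order.succ (nadd x.1 b)) (⨆ y : Set.Iio b, Order.succ (nadd a y.1))
termination_by a b => (a, b)
decreasing_by
  · exact Prod.Lex.left _ _ x.2
  · exact Prod.Lex.right _ y.2

infixl:65 " ♯ " => nadd

theorem nadd_le_iff {a b c : Ordinal.{u}} :
    a ♯ b ≤ c ↔ (∀ a' < a, a' ♯ b < c) ∧ ∀ b' < b, a ♯ b' < c := by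
  rw [nadd, max_le_iff, Ordinal.iSup_le_iff, Ordinal.iSup_le_iff]
  simp only [Order.succ_le_iff, Subtype.forall, Set.mem_Iio]

theorem nadd_lt_nadd_left {b c : Ordinal.{u}} (h : b < c) (a : Ordinal.{u}) : a ♯ b < a ♯ c :=
  (nadd_le_iff.1 le_rfl).2 b h

theorem nadd_lt_nadd_right {b c : Ordinal.{u}} (h : b < c) (a : Ordinal.{u}) : b ♯ a < c ♯ a :=
  (nadd_le_iff.1 le_rfl).1 b h

theorem nadd_le_nadd_left {b c : Ordinal.{u}} (h : b ≤ c) (a : Ordinal.{u}) : a ♯ b ≤ a ♯ c := by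
  rcases h.lt_or_eq with h | rfl
  · exact (nadd_lt_nadd_left h a).le
  · exact le_rfl

theorem nadd_le_nadd_right {b c : Ordinal.{u}} (h : b ≤ c) (a : Ordinal.{u}) : b ♯ a ≤ c ♯ a := by
  rcases h.lt_or_eq with h | rfl
  · exact (nadd_lt_nadd_right h a).le
  · exact le_rfl

theorem lt_nadd_iff {a b c : Ordinal.{u}} :
    a < b ♯ c ↔ (∃ b' < b, a ≤ b' ♯ c) ∨ ∃ c' < c, a ≤ b ♯ c' := by
  rw [← not_le, nadd_le_iff, not_and_or]
  push_neg
  rfl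

theorem nadd_comm (a b : Ordinal.{u}) : a ♯ b = b ♯ a := by
  induction a using Ordinal.induction generalizing b with
  | _ a IHa =>
  induction b using Ordinal.induction with
  | _ b IHb =>
  apply le_antisymm
  · rw [nadd_le_iff]
    refine ⟨fun a' ha' => ?_, fun b' hb' => ?_⟩
    · rw [IHa a' ha' b]; exact nadd_lt_nadd_left ha' b
    · rw [IHb b' hb']; exact nadd_lt_nadd_right hb' a
  · rw [nadd_le_iff]
    refine ⟨fun b' hb' => ?_, fun a' ha' => ?_⟩
    · rw [← IHb b' hb']; exact nadd_lt_nadd_left hb' a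
    · rw [← IHa a' ha' b]; exact nadd_lt_nadd_right ha' b

theorem nadd_zero (a : Ordinal.{u}) : a ♯ 0 = a := by
  induction a using Ordinal.induction with
  | _ a IH =>
  apply le_antisymm
  · rw [nadd_le_iff]
    refine ⟨fun a' ha' => ?_, fun b' hb' => absurd hb' (not_lt_of_ge (zero_le (a := b')))⟩
    rw [IH a' ha']; exact ha'
  · refine le_of_forall_lt fun c hc => ?_
    rw [← IH c hc]
    exact nadd_lt_nadd_right hc 0

theorem zero_nadd (a : Ordinal.{u}) : 0 ♯ a = a := by
  rw [nadd_comm, nadd_zero]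

theorem nadd_assoc (a b c : Ordinal.{u}) : a ♯ b ♯ c = a ♯ (b ♯ c) := by
  induction a using Ordinal.induction generalizing b c with
  | _ a IHa =>
  induction b using Ordinal.induction generalizing c with
  | _ b IHb =>
  induction c using Ordinal.induction with
  | _ c IHc =>
  apply le_antisymm
  · rw [nadd_le_iff]
    refine ⟨fun d hd => ?_, fun c' hc' => ?_⟩
    · rcases lt_nadd_iff.1 hd with ⟨a', ha', hd'⟩ | ⟨b', hb', hd'⟩
      · calc d ♯ c ≤ a' ♯ b ♯ c := nadd_le_nadd_right hd' c
          _ = a' ♯ (b ♯ c) := IHa a' ha' b c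
          _ < a ♯ (b ♯ c) := nadd_lt_nadd_right ha' _
      · calc d ♯ c ≤ a ♯ b' ♯ c := nadd_le_nadd_right hd' c
          _ = a ♯ (b' ♯ c) := IHb b' hb' c
          _ < a ♯ (b ♯ c) := nadd_lt_nadd_left (nadd_lt_nadd_right hb' c) _
    · rw [IHc c' hc']
      exact nadd_lt_nadd_left (nadd_lt_nadd_left hc' b) a
  · rw [nadd_le_iff]
    refine ⟨fun a' ha' => ?_, fun d hd => ?_⟩
    · rw [← IHa a' ha' b c]
      exact nadd_lt_nadd_right (nadd_lt_nadd_right ha' b) c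
    · rcases lt_nadd_iff.1 hd with ⟨b', hb', hd'⟩ | ⟨c', hc', hd'⟩
      · calc a ♯ d ≤ a ♯ (b' ♯ c) := nadd_le_nadd_left hd' a
          _ = a ♯ b' ♯ c := (IHb b' hb' c).symm
          _ < a ♯ b ♯ c := nadd_lt_nadd_right (nadd_lt_nadd_left hb' a) c
      · calc a ♯ d ≤ a ♯ (b ♯ c') := nadd_le_nadd_left hd' a
          _ = a ♯ b ♯ c' := (IHc c' hc').symm
          _ < a ♯ b ♯ c := nadd_lt_nadd_left hc' _

theorem nadd_one (a : Ordinal.{u}) : a ♯ 1 = a + 1 := by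
  induction a using Ordinal.induction with
  | _ a IH =>
  apply le_antisymm
  · rw [nadd_le_iff]
    refine ⟨fun a' ha' => ?_, fun b' hb' => ?_⟩
    · rw [IH a' ha', ← Order.succ_eq_add_one, ← Order.succ_eq_add_one]
      exact Order.succ_lt_succ ha'
    · rw [Ordinal.lt_one_iff_zero.1 hb', nadd_zero]
      exact lt_add_one a
  · rw [← Order.succ_eq_add_one, Order.succ_le_iff]
    calc a = a ♯ 0 := (nadd_zero a).symm
      _ < a ♯ 1 := nadd_lt_nadd_left zero_lt_one a

theorem nadd_nat (a : Ordinal.{u}) (n : ℕ) : a ♯ n = a + n := by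
  induction n with
  | zero => simp [nadd_zero]
  | succ n ih =>
    rw [Nat.cast_succ, ← nadd_one, ← nadd_assoc, ih, nadd_one, add_assoc, nadd_one]

end Ordinal

def NatOrdinal : Type (u + 1) := Ordinal.{u}

noncomputable instance : LinearOrder NatOrdinal.{u} := inferInstanceAs (LinearOrder Ordinal.{u})

noncomputable instance : SuccOrder NatOrdinal.{u} := inferInstanceAs (SuccOrder Ordinal.{u})

noncomputable def toNatOrdinal : Ordinal.{u} ≃o NatOrdinal.{u} := OrderIso.refl _

noncomputable def NatOrdinal.toOrdinal : NatOrdinal.{u} ≃o Ordinal.{u} := OrderIso.refl _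

@[simp]
theorem NatOrdinal.toOrdinal_toNatOrdinal (a : NatOrdinal.{u}) :
    toNatOrdinal (NatOrdinal.toOrdinal a) = a := rfl

noncomputable instance : Add NatOrdinal.{u} :=
  ⟨fun a b => toNatOrdinal (Ordinal.nadd (NatOrdinal.toOrdinal a) (NatOrdinal.toOrdinal b))⟩

noncomputable instance : Zero NatOrdinal.{u} := ⟨toNatOrdinal 0⟩

noncomputable instance : One NatOrdinal.{u} := ⟨toNatOrdinal 1⟩

@[simp]
theorem NatOrdinal.toOrdinal_zero : NatOrdinal.toOrdinal (0 : NatOrdinal.{u}) = 0 := rfl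

theorem Ordinal.nadd_eq_add (a b : Ordinal.{u}) :
    Ordinal.nadd a b = NatOrdinal.toOrdinal (toNatOrdinal a + toNatOrdinal b) := rfl

theorem NatOrdinal.succ_def (a : NatOrdinal.{u}) :
    Order.succ a = toNatOrdinal (NatOrdinal.toOrdinal a + 1) :=
  Order.succ_eq_add_one (α := Ordinal.{u}) a

noncomputable instance : AddCommMonoid NatOrdinal.{u} where
  add_assoc a b c := Ordinal.nadd_assoc _ _ _
  zero_add a := Ordinal.zero_nadd _
  add_zero a := Ordinal.nadd_zero _
  add_comm a b := Ordinal.nadd_comm _ _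
  nsmul := nsmulRec

instance : IsOrderedCancelAddMonoid NatOrdinal.{u} where
  add_le_add_left a b h c := Ordinal.nadd_le_nadd_right h _
  le_of_add_le_add_left a b c h := by
    by_contra h'
    exact absurd h (not_le.2 (Ordinal.nadd_lt_nadd_left (not_le.1 h') _))

noncomputable instance : SuccAddOrder NatOrdinal.{u} where
  succ_eq_add_one x := (Ordinal.nadd_one (NatOrdinal.toOrdinal x)).symm


/-! ### Natural addition and `ω ^ β` -/

theorem my_nadd_decomp {β : Ordinal.{u}}
    (hp : ∀ x y : Ordinal.{u}, x < ω ^ β → y < ω ^ β → x ♯ y < ω ^ β) :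
    ∀ u d c e a₀ b₀ : Ordinal.{u}, c ♯ e = u → a₀ ♯ b₀ = d → a₀ < ω ^ β → b₀ < ω ^ β →
      (ω ^ β * c + a₀) ♯ (ω ^ β * e + b₀) ≤ ω ^ β * (c ♯ e) + (a₀ ♯ b₀) := by
  have hω : (ω ^ β : Ordinal) ≠ 0 := opow_ne_zero β omega0_ne_zero
  intro u
  induction u using Ordinal.induction with
  | _ u IHu =>
  intro d
  induction d using Ordinal.induction with
  | _ d IHd =>
  intro c e a₀ b₀ hu hd ha₀ hb₀
  subst hu; subst hd
  rw [nadd_le_iff]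
  constructor
  · intro a' ha'
    rcases lt_or_ge a' (ω ^ β * c) with h1 | h2
    · have hc' : a' / ω ^ β < c := (Ordinal.div_lt hω).2 h1
      have key := IHu (a' / ω ^ β ♯ e) (nadd_lt_nadd_right hc' e)
        (a' % ω ^ β ♯ b₀) (a' / ω ^ β) e (a' % ω ^ β) b₀ rfl rfl
        (Ordinal.mod_lt a' hω) hb₀
      calc a' ♯ (ω ^ β * e + b₀)
          = (ω ^ β * (a' / ω ^ β) + a' % ω ^ β) ♯ (ω ^ β * e + b₀) := by
            rw [Ordinal.div_add_mod]
        _ ≤ ω ^ β * (a' / ω ^ β ♯ e) + (a' % ω ^ β ♯ b₀) := key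
        _ < ω ^ β * (a' / ω ^ β ♯ e) + ω ^ β :=
            add_lt_add_right (hp _ _ (Ordinal.mod_lt a' hω) hb₀) _
        _ = ω ^ β * Order.succ (a' / ω ^ β ♯ e) := (mul_succ _ _).symm
        _ ≤ ω ^ β * (c ♯ e) :=
            mul_le_mul_right (Order.succ_le_of_lt (nadd_lt_nadd_right hc' e)) _
        _ ≤ ω ^ β * (c ♯ e) + (a₀ ♯ b₀) := le_self_add
    · have hsum : ω ^ β * c + (a' - ω ^ β * c) = a' := Ordinal.add_sub_cancel_of_le h2
      have ha₀' : a' - ω ^ β * c < a₀ := by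
        have h3 : ω ^ β * c + (a' - ω ^ β * c) < ω ^ β * c + a₀ := by rw [hsum]; exact ha'
        exact lt_of_add_lt_add_left h3
      have key := IHd ((a' - ω ^ β * c) ♯ b₀) (nadd_lt_nadd_right ha₀' b₀)
        c e (a' - ω ^ β * c) b₀ rfl rfl (ha₀'.trans ha₀) hb₀
      calc a' ♯ (ω ^ β * e + b₀)
          = (ω ^ β * c + (a' - ω ^ β * c)) ♯ (ω ^ β * e + b₀) := by rw [hsum]
        _ ≤ ω ^ β * (c ♯ e) + ((a' - ω ^ β * c) ♯ b₀) := key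
        _ < ω ^ β * (c ♯ e) + (a₀ ♯ b₀) :=
            add_lt_add_right (nadd_lt_nadd_right ha₀' b₀) _
  · intro b' hb'
    rcases lt_or_ge b' (ω ^ β * e) with h1 | h2
    · have he' : b' / ω ^ β < e := (Ordinal.div_lt hω).2 h1
      have key := IHu (c ♯ b' / ω ^ β) (nadd_lt_nadd_left he' c)
        (a₀ ♯ b' % ω ^ β) c (b' / ω ^ β) a₀ (b' % ω ^ β) rfl rfl
        ha₀ (Ordinal.mod_lt b' hω)
      calc (ω ^ β * c + a₀) ♯ b'
          = (ω ^ β * c + a₀) ♯ (ω ^ β * (b' / ω ^ β) + b' % ω ^ β) := by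
            rw [Ordinal.div_add_mod]
        _ ≤ ω ^ β * (c ♯ b' / ω ^ β) + (a₀ ♯ b' % ω ^ β) := key
        _ < ω ^ β * (c ♯ b' / ω ^ β) + ω ^ β :=
            add_lt_add_right (hp _ _ ha₀ (Ordinal.mod_lt b' hω)) _
        _ = ω ^ β * Order.succ (c ♯ b' / ω ^ β) := (mul_succ _ _).symm
        _ ≤ ω ^ β * (c ♯ e) :=
            mul_le_mul_right (Order.succ_le_of_lt (nadd_lt_nadd_left he' c)) _
        _ ≤ ω ^ β * (c ♯ e) + (a₀ ♯ b₀) := le_self_add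
    · have hsum : ω ^ β * e + (b' - ω ^ β * e) = b' := Ordinal.add_sub_cancel_of_le h2
      have hb₀' : b' - ω ^ β * e < b₀ := by
        have h3 : ω ^ β * e + (b' - ω ^ β * e) < ω ^ β * e + b₀ := by rw [hsum]; exact hb'
        exact lt_of_add_lt_add_left h3
      have key := IHd (a₀ ♯ (b' - ω ^ β * e)) (nadd_lt_nadd_left hb₀' a₀)
        c e a₀ (b' - ω ^ β * e) rfl rfl ha₀ (hb₀'.trans hb₀)
      calc (ω ^ β * c + a₀) ♯ b'
          = (ω ^ β * c + a₀) ♯ (ω ^ β * e + (b' - ω ^ β * e)) := by rw [hsum]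
        _ ≤ ω ^ β * (c ♯ e) + (a₀ ♯ (b' - ω ^ β * e)) := key
        _ < ω ^ β * (c ♯ e) + (a₀ ♯ b₀) :=
            add_lt_add_right (nadd_lt_nadd_left hb₀' a₀) _

theorem my_nadd_lt_omega0_opow :
    ∀ β a b : Ordinal.{u}, a < ω ^ β → b < ω ^ β → a ♯ b < ω ^ β := by
  intro β
  induction β using Ordinal.induction with
  | _ β IH =>
  intro a b ha hb
  rcases eq_or_ne a 0 with rfl | ha0
  · rwa [zero_nadd]
  rcases eq_or_ne b 0 with rfl | hb0
  · rwa [nadd_zero]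
  set γ := max (log ω a) (log ω b) with hγ
  have hγβ : γ < β :=
    max_lt ((lt_opow_iff_log_lt one_lt_omega0 ha0).1 ha)
      ((lt_opow_iff_log_lt one_lt_omega0 hb0).1 hb)
  have hpγ : ∀ x y : Ordinal.{u}, x < ω ^ γ → y < ω ^ γ → x ♯ y < ω ^ γ := IH γ hγβ
  have hω : (ω ^ γ : Ordinal) ≠ 0 := opow_ne_zero γ omega0_ne_zero
  have ha1 : a < ω ^ γ * ω := by
    calc a < ω ^ Order.succ (log ω a) := lt_opow_succ_log_self one_lt_omega0 a
      _ ≤ ω ^ Order.succ γ :=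
          opow_le_opow_right omega0_pos (Order.succ_le_succ (le_max_left _ _))
      _ = ω ^ γ * ω := opow_succ ω γ
  have hb1 : b < ω ^ γ * ω := by
    calc b < ω ^ Order.succ (log ω b) := lt_opow_succ_log_self one_lt_omega0 b
      _ ≤ ω ^ Order.succ γ :=
          opow_le_opow_right omega0_pos (Order.succ_le_succ (le_max_right _ _))
      _ = ω ^ γ * ω := opow_succ ω γ
  have hfin : (a / ω ^ γ) ♯ (b / ω ^ γ) < ω := by
    obtain ⟨n, hn⟩ := lt_omega0.1 ((Ordinal.div_lt hω).2 ha1)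
    obtain ⟨m, hm⟩ := lt_omega0.1 ((Ordinal.div_lt hω).2 hb1)
    rw [hn, hm, nadd_nat, ← Nat.cast_add]
    exact nat_lt_omega0 _
  have hdecomp := my_nadd_decomp hpγ _ _ (a / ω ^ γ) (b / ω ^ γ) (a % ω ^ γ) (b % ω ^ γ)
    rfl rfl (Ordinal.mod_lt a hω) (Ordinal.mod_lt b hω)
  calc a ♯ b
      = (ω ^ γ * (a / ω ^ γ) + a % ω ^ γ) ♯ (ω ^ γ * (b / ω ^ γ) + b % ω ^ γ) := by
        rw [Ordinal.div_add_mod, Ordinal.div_add_mod]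
    _ ≤ ω ^ γ * ((a / ω ^ γ) ♯ (b / ω ^ γ)) + ((a % ω ^ γ) ♯ (b % ω ^ γ)) := hdecomp
    _ < ω ^ γ * ((a / ω ^ γ) ♯ (b / ω ^ γ)) + ω ^ γ :=
        add_lt_add_right (hpγ _ _ (Ordinal.mod_lt a hω) (Ordinal.mod_lt b hω)) _
    _ = ω ^ γ * Order.succ ((a / ω ^ γ) ♯ (b / ω ^ γ)) := (mul_succ _ _).symm
    _ < ω ^ γ * ω :=
        mul_lt_mul_of_pos_left (isSuccLimit_omega0.succ_lt hfin) (opow_pos γ omega0_pos)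
    _ = ω ^ Order.succ γ := (opow_succ ω γ).symm
    _ ≤ ω ^ β := opow_le_opow_right omega0_pos (Order.succ_le_of_lt hγβ)


theorem my_elRank_le_of_strict {P : Type u} [PartialOrder P] [WellFoundedLT P]
    (g : P → Ordinal.{u}) (hg : ∀ {q p : P}, q < p → g q < g p) (p : P) : elRank p ≤ g p := by
  refine IsWellFounded.induction (α := P) (· < ·) (motive := fun p => elRank p ≤ g p) p fun p IH => ?_
  show IsWellFounded.rank (α := P) (· < ·) p ≤ g p
  rw [IsWellFounded.rank_eq]
  apply Ordinal.iSup_le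
  rintro ⟨q, hq⟩
  exact Order.succ_le_of_lt (lt_of_le_of_lt (IH q hq) (hg hq))

theorem my_elRank_le_elRank {A C : Type u} [PartialOrder A] [WellFoundedLT A]
    [PartialOrder C] [WellFoundedLT C] (g : A → C) (hg : StrictMono g) (a : A) :
    elRank a ≤ elRank (g a) :=
  my_elRank_le_of_strict (fun x => elRank (g x))
    (fun h => WellFoundedLT.rank_strictMono (hg h)) a

theorem my_ordRank_le {A C : Type u} [PartialOrder A] [WellFoundedLT A]
    [PartialOrder C] [WellFoundedLT C] (g : A → C) (hg : StrictMono g) :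
    ordRank A ≤ ordRank C := by
  apply Ordinal.iSup_le
  intro a
  calc elRank a + 1 ≤ elRank (g a) + 1 := add_le_add_left (my_elRank_le_elRank g hg a) 1
    _ ≤ ordRank C := Ordinal.le_iSup (fun c : C => elRank c + 1) (g a)

theorem my_ordRank_eq {A C : Type u} [PartialOrder A] [WellFoundedLT A]
    [PartialOrder C] [WellFoundedLT C] (e : A ≃o C) : ordRank A = ordRank C :=
  le_antisymm (my_ordRank_le e e.strictMono) (my_ordRank_le e.symm e.symm.strictMono)

/-- Ordinals of the form `ω^α` are rank-sum-indecomposable for well-founded partial orders: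
if a well-founded partial order `P` is a sum-augmentation of `(B 0, …, B (n-1))` and
`rank P = ω^α`, then `rank (B i) = ω^α` for some `i`. -/
theorem omega_pow_rank_sum_indecomposable {n : ℕ} {P : Type u} [PartialOrder P]
    [WellFoundedLT P] (B : Fin n → Type u) [∀ i, PartialOrder (B i)]
    [∀ i, WellFoundedLT (B i)] (hsum : SumAugmentation P B) (α : Ordinal.{u})
    (hrank : ordRank P = Ordinal.omega0 ^ α) :
    ∃ i : Fin n, ordRank (B i) = Ordinal.omega0 ^ α := by
  classical
  obtain ⟨f, hB⟩ := hsum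
  by_contra hcon
  push_neg at hcon
  haveI hwfS : ∀ i, WellFoundedLT {a : P // f a = i} := fun i =>
    (Subtype.strictMono_coe _).wellFoundedLT
  -- the parts have rank `< ω ^ α`
  have hSrank : ∀ i, ordRank {a : P // f a = i} = ordRank (B i) := fun i =>
    my_ordRank_eq (hB i).some
  have hltS : ∀ i, ordRank {a : P // f a = i} < ω ^ α := by
    intro i
    refine lt_of_le_of_ne ?_ ?_
    · rw [← hrank]
      exact my_ordRank_le Subtype.val (Subtype.strictMono_coe _)
    · rw [hSrank i]; exact hcon i
  -- the rank of `p` within the `i`-th part (or of the set of its lower bounds there)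
  set t : P → Fin n → Ordinal.{u} := fun p i =>
    ⨆ q : {q : {a : P // f a = i} // q.val < p}, elRank q.val + 1 with ht
  have htmono : ∀ {q p : P}, q < p → ∀ i, t q i ≤ t p i := by
    intro q p hqp i
    exact Ordinal.iSup_le fun x =>
      Ordinal.le_iSup (fun y : {y : {a : P // f a = i} // y.val < p} => elRank y.val + 1)
        ⟨x.val, lt_trans x.2 hqp⟩
  have htval : ∀ p : P, t p (f p) = elRank (⟨p, rfl⟩ : {a : P // f a = f p}) := by
    intro p
    apply le_antisymm
    · apply Ordinal.iSup_le
      rintro ⟨x, hlt⟩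
      have : x < (⟨p, rfl⟩ : {a : P // f a = f p}) := hlt
      have h2 : elRank x < elRank (⟨p, rfl⟩ : {a : P // f a = f p}) :=
        WellFoundedLT.rank_strictMono this
      exact Order.add_one_le_of_lt h2
    · show IsWellFounded.rank (α := {a : P // f a = f p}) (· < ·) _ ≤ _
      rw [IsWellFounded.rank_eq]
      apply Ordinal.iSup_le
      rintro ⟨x, hlt⟩
      rw [Order.succ_eq_add_one]
      exact Ordinal.le_iSup
        (fun y : {y : {a : P // f a = f p} // y.val < p} => elRank y.val + 1) ⟨x, hlt⟩
  have htstep : ∀ {q p : P}, q < p → t q (f q) + 1 ≤ t p (f q) := by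
    intro q p hqp
    rw [htval q]
    exact Ordinal.le_iSup
      (fun y : {y : {a : P // f a = f q} // y.val < p} => elRank y.val + 1) ⟨⟨q, rfl⟩, hqp⟩
  have htbound : ∀ (p : P) (i : Fin n), t p i ≤ ordRank {a : P // f a = i} := fun p i =>
    Ordinal.iSup_le fun x =>
      Ordinal.le_iSup (fun y : {a : P // f a = i} => elRank y + 1) x.val
  have htbound' : ∀ p : P, t p (f p) + 1 ≤ ordRank {a : P // f a = f p} := by
    intro p
    rw [htval p]
    exact Ordinal.le_iSup (fun y : {a : P // f a = f p} => elRank y + 1) ⟨p, rfl⟩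
  -- sum everything up using the natural sum
  set h : P → NatOrdinal.{u} := fun p => ∑ i : Fin n, toNatOrdinal (t p i) with hh
  have hmono : ∀ {q p : P}, q < p → h q < h p := by
    intro q p hqp
    apply Finset.sum_lt_sum (fun i _ => toNatOrdinal.le_iff_le.2 (htmono hqp i))
    refine ⟨f q, Finset.mem_univ _, ?_⟩
    exact toNatOrdinal.lt_iff_lt.2 (lt_of_lt_of_le (lt_add_one _) (htstep hqp))
  have hrk : ∀ p : P, elRank p ≤ NatOrdinal.toOrdinal (h p) :=
    my_elRank_le_of_strict _ (fun hqp => NatOrdinal.toOrdinal.lt_iff_lt.2 (hmono hqp))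
  set N : NatOrdinal.{u} := ∑ i : Fin n, toNatOrdinal (ordRank {a : P // f a = i}) with hN
  have hNP : ordRank P ≤ NatOrdinal.toOrdinal N := by
    apply Ordinal.iSup_le
    intro p
    have h1 : h p + 1 ≤ N := by
      have h2 : h p + 1 =
          ∑ i : Fin n, (toNatOrdinal (t p i) + if i = f p then 1 else 0) := by
        rw [Finset.sum_add_distrib]
        congr 1
        simp
      rw [h2]
      apply Finset.sum_le_sum
      intro i _
      by_cases hi : i = f p
      · rw [hi]
        simp only [if_pos rfl]
        show toNatOrdinal (t p (f p)) + 1 ≤ toNatOrdinal (ordRank {a : P // f a = f p})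
        have h3 : toNatOrdinal (t p (f p)) + 1 = toNatOrdinal (t p (f p) + 1) := by
          rw [Order.succ_eq_add_one (toNatOrdinal (t p (f p))) |>.symm, NatOrdinal.succ_def]
          rfl
        rw [h3]
        exact toNatOrdinal.le_iff_le.2 (htbound' p)
      · simp only [if_neg hi, add_zero]
        exact toNatOrdinal.le_iff_le.2 (htbound p i)
    calc elRank p + 1 ≤ NatOrdinal.toOrdinal (h p) + 1 := add_le_add_left (hrk p) 1
      _ = NatOrdinal.toOrdinal (h p + 1) := by
          rw [← Order.succ_eq_add_one (h p), NatOrdinal.succ_def]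
          rfl
      _ ≤ NatOrdinal.toOrdinal N := NatOrdinal.toOrdinal.le_iff_le.2 h1
  -- but a finite natural sum of ordinals `< ω ^ α` is `< ω ^ α`
  have hNsmall : ∀ s : Finset (Fin n),
      NatOrdinal.toOrdinal (∑ i ∈ s, toNatOrdinal (ordRank {a : P // f a = i})) < ω ^ α := by
    intro s
    induction s using Finset.induction with
    | empty => simpa using opow_pos α omega0_pos
    | @insert x s hx ih =>
      rw [Finset.sum_insert hx]
      have := nadd_eq_add (ordRank {a : P // f a = x})
        (NatOrdinal.toOrdinal (∑ i ∈ s, toNatOrdinal (ordRank {a : P // f a = i})))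
      simp only [NatOrdinal.toOrdinal_toNatOrdinal] at this
      rw [← this]
      exact my_nadd_lt_omega0_opow α _ _ (hltS x) ih
  have : ordRank P < ω ^ α := lt_of_le_of_lt hNP (hNsmall Finset.univ)
  rw [hrank] at this
  exact lt_irrefl _ this
end

section
/- Let P be a countable wulpo which is a tamely colorable box-augmentation of partial orders (P₁, …, Pₙ) via the bijection η, and let c ∈ ℕ be such that for all antichains Aᵢ ⊆ Pᵢ, every chain contained in η(A₁ × ⋯ × Aₙ) has fewer than c elements. Then there is a map μ : P → {1, …, c} such that for every chain L ⊆ P and all p, p' ∈ L: μ(p) = μ(p') if and only if p ≡ p', where ≡ is the same-factor equivalence. -/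
universe u

/-- A partial order is upwards linear if for every `p` the set `{x | p < x}` is linearly
ordered. -/
def UpwardsLinear (P : Type u) [PartialOrder P] : Prop :=
  ∀ p x y : P, p < x → p < y → x ≤ y ∨ y ≤ x

/-- Two elements lie in the same connected component of the comparability graph. -/
def SameComp {B : Type u} [PartialOrder B] (a b : B) : Prop :=
  Relation.ReflTransGen (fun x y : B => x ≤ y ∨ y ≤ x) a b

/-- `η` witnesses that `A` is a box-augmentation of the family `B`. -/
def IsBoxAugmentation {n : ℕ} (A : Type u) [PartialOrder A] (B : Fin n → Type u)
    [∀ i, PartialOrder (B i)] (η : (∀ i, B i) ≃ A) : Prop :=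
  ∀ (k : Fin n) (d : ∀ i, B i) (e e' : B k),
    e ≤ e' ↔ η (Function.update d k e) ≤ η (Function.update d k e')

/-- The box-augmentation `η` is tamely colorable: there are finite colorings
`σ i : B i × B i → C i` such that the tuple of colors of the componentwise preimages
determines the order relation on `A`. -/
def TamelyColorable {n : ℕ} (A : Type u) [PartialOrder A] (B : Fin n → Type u)
    [∀ i, PartialOrder (B i)] (η : (∀ i, B i) ≃ A) : Prop :=
  ∃ (C : Fin n → Type u) (_ : ∀ i, Finite (C i)) (σ : ∀ i, B i → B i → C i),
    ∀ b b' c c' : ∀ i, B i, (∀ i, σ i (b i) (b' i) = σ i (c i) (c' i)) →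
      (η b ≤ η b' ↔ η c ≤ η c')



section AuxAll

set_option linter.unusedSectionVars false
set_option linter.unusedVariables false

section Aux

variable {n : ℕ} {P : Type u} [PartialOrder P] {B : Fin n → Type u}
  [∀ i, PartialOrder (B i)] (η : (∀ i, B i) ≃ P)

lemma sameComp_refl {X : Type u} [PartialOrder X] (a : X) : SameComp a a :=
  Relation.ReflTransGen.refl

lemma sameComp_symm {X : Type u} [PartialOrder X] {a b : X} (h : SameComp a b) :
    SameComp b a :=
  haveI : Std.Symm (fun x y : X => x ≤ y ∨ y ≤ x) := ⟨fun _ _ hxy => hxy.symm⟩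
  Std.Symm.symm (r := Relation.ReflTransGen fun x y : X => x ≤ y ∨ y ≤ x) _ _ h

lemma sameComp_trans {X : Type u} [PartialOrder X] {a b c : X} (h : SameComp a b)
    (h' : SameComp b c) : SameComp a c := h.trans h'

def sfRel (p q : P) : Prop := ∀ i, SameComp (η.symm p i) (η.symm q i)

lemma sfRel_equivalence : Equivalence (sfRel η) where
  refl _ := fun i => sameComp_refl _
  symm h := fun i => sameComp_symm (h i)
  trans h h' := fun i => sameComp_trans (h i) (h' i)

def sfSetoid : Setoid P := ⟨sfRel η, sfRel_equivalence η⟩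

lemma comp_above (hP : UpwardsLinear P) {p x y : P} (hx : p ≤ x) (hy : p ≤ y) :
    x ≤ y ∨ y ≤ x := by
  rcases eq_or_lt_of_le hx with rfl | hx'
  · exact Or.inl hy
  rcases eq_or_lt_of_le hy with rfl | hy'
  · exact Or.inr hx'.le
  exact hP p x y hx' hy'

/-- The clique lemma: a finite set of pairwise comparable, pairwise same-factor
inequivalent elements has fewer than `c` elements. -/
lemma clique_lemma (hP : UpwardsLinear P) (hbox : IsBoxAugmentation P B η) {c : ℕ}
    (hc : ∀ A : ∀ i, Set (B i), (∀ i, IsAntichain (· ≤ ·) (A i)) →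
      ∀ L : Set P, IsChain (· ≤ ·) L → L ⊆ η '' {f | ∀ i, f i ∈ A i} →
        L.Finite ∧ L.ncard < c)
    (s : Finset P)
    (hcomp : ∀ a ∈ s, ∀ b ∈ s, a ≤ b ∨ b ≤ a)
    (hne : ∀ a ∈ s, ∀ b ∈ s, a ≠ b → ¬ sfRel η a b) : s.card < c := by
  classical
  set V : ∀ i, Set (B i) := fun i => (fun a => η.symm a i) '' ↑s with hV
  have hVfin : ∀ i, (V i).Finite := fun i => s.finite_toSet.image _
  have hSpifin : (Set.pi Set.univ V).Finite := Set.Finite.pi hVfin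
  set S : Set P := η '' (Set.pi Set.univ V) with hS
  have hSfin : S.Finite := hSpifin.image _
  -- the potential of an element
  set φ : P → ℕ := fun x => (S ∩ {z | x < z}).ncard with hφdef
  have hφ : ∀ x y : P, y ∈ S → x < y → φ y < φ x := by
    intro x y hyS hxy
    apply Set.ncard_lt_ncard
    · constructor
      · rintro z ⟨hzS, hz⟩; exact ⟨hzS, hxy.trans hz⟩
      · intro hsub
        have := hsub ⟨hyS, hxy⟩
        exact lt_irrefl y this.2
    · exact hSfin.inter_of_left _
  have main : ∀ N : ℕ, ∀ t : P → ∀ i, B i,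
      (∀ a ∈ s, ∀ i, SameComp (t a i) (η.symm a i)) →
      (∀ a ∈ s, ∀ b ∈ s, η (t a) ≤ η (t b) ∨ η (t b) ≤ η (t a)) →
      (∀ a ∈ s, ∀ i, t a i ∈ V i) →
      (∑ a ∈ s, φ (η (t a)) ≤ N) → s.card < c := by
    intro N
    induction N using Nat.strong_induction_on with
    | _ N IH =>
      intro t h1 h3 h4 hM
      -- injectivity of a ↦ η (t a) on s
      have hinj : ∀ a ∈ s, ∀ b ∈ s, η (t a) = η (t b) → a = b := by
        intro a ha b hb heq
        by_contra hab
        apply hne a ha b hb hab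
        intro i
        have h1a := h1 a ha i
        have h1b := h1 b hb i
        have : t a = t b := η.injective heq
        rw [this] at h1a
        exact sameComp_trans (sameComp_symm h1a) h1b
      by_cases hmov : ∃ a ∈ s, ∃ b ∈ s, ∃ i, t a i < t b i
      · -- make a move
        obtain ⟨a, ha, b, hb, i, hlt⟩ := hmov
        set newval : ∀ i, B i := Function.update (t a) i (t b i) with hnewval
        have hkey : η (t a) < η newval := by
          have hle : η (t a) ≤ η newval := by
            have := (hbox i (t a) (t a i) (t b i)).mp hlt.le
            rwa [Function.update_eq_self] at this
          have hne' : η (t a) ≠ η newval := by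
            intro h
            have : t a = newval := η.injective h
            have : t a i = newval i := congrFun this i
            rw [hnewval, Function.update_self] at this
            exact hlt.ne this
          exact lt_of_le_of_ne hle hne'
        set t' : P → ∀ i, B i := Function.update t a newval with ht'
        have ht'a : t' a = newval := Function.update_self a newval t
        have ht'x : ∀ x, x ≠ a → t' x = t x := fun x hx => Function.update_of_ne hx newval t
        have hcompnew : ∀ z ∈ s, η newval ≤ η (t z) ∨ η (t z) ≤ η newval := by
          intro z hz
          rcases h3 a ha z hz with h | h
          · rcases eq_or_lt_of_le h with heq | hlt'
            · refine Or.inr ?_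
              rw [← heq]
              exact hkey.le
            · exact comp_above hP hkey.le hlt'.le
          · exact Or.inr (h.trans hkey.le)
        -- invariants for t'
        have h1' : ∀ x ∈ s, ∀ j, SameComp (t' x j) (η.symm x j) := by
          intro x hx j
          by_cases hxa : x = a
          · rw [hxa, ht'a]
            by_cases hji : j = i
            · subst hji
              rw [hnewval, Function.update_self]
              have step : SameComp (t b j) (t a j) :=
                Relation.ReflTransGen.single (Or.inr hlt.le)
              exact sameComp_trans step (h1 a ha j)
            · rw [hnewval, Function.update_of_ne hji]
              exact h1 a ha j
          · rw [ht'x x hxa]; exact h1 x hx j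
        have h3' : ∀ x ∈ s, ∀ y ∈ s, η (t' x) ≤ η (t' y) ∨ η (t' y) ≤ η (t' x) := by
          intro x hx y hy
          by_cases hxa : x = a <;> by_cases hya : y = a
          · rw [hxa, hya]; exact Or.inl le_rfl
          · rw [hxa, ht'a, ht'x y hya]; exact hcompnew y hy
          · rw [hya, ht'a, ht'x x hxa]; exact (hcompnew x hx).symm
          · rw [ht'x x hxa, ht'x y hya]; exact h3 x hx y hy
        have h4' : ∀ x ∈ s, ∀ j, t' x j ∈ V j := by
          intro x hx j
          by_cases hxa : x = a
          · rw [hxa, ht'a]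
            by_cases hji : j = i
            · subst hji; rw [hnewval, Function.update_self]; exact h4 b hb j
            · rw [hnewval, Function.update_of_ne hji]; exact h4 a ha j
          · rw [ht'x x hxa]; exact h4 x hx j
        -- measure decreases
        have hnewS : η newval ∈ S := by
          refine ⟨newval, ?_, rfl⟩
          intro j _
          have := h4' a ha j
          rwa [ht'a] at this
        have hdec : ∑ x ∈ s, φ (η (t' x)) < ∑ x ∈ s, φ (η (t x)) := by
          apply Finset.sum_lt_sum
          · intro x hx
            by_cases hxa : x = a
            · rw [hxa, ht'a]
              exact (hφ _ _ hnewS hkey).le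
            · rw [ht'x x hxa]
          · exact ⟨a, ha, by rw [ht'a]; exact hφ _ _ hnewS hkey⟩
        exact IH (∑ x ∈ s, φ (η (t' x))) (lt_of_lt_of_le hdec hM) t' h1' h3' h4' le_rfl
      · -- final state: coordinates pairwise equal-or-incomparable
        push_neg at hmov
        set A : ∀ i, Set (B i) := fun i => (fun a => t a i) '' ↑s with hA
        have hanti : ∀ i, IsAntichain (· ≤ ·) (A i) := by
          intro i x hx y hy hxy hle
          obtain ⟨a, ha, rfl⟩ := hx
          obtain ⟨b, hb, rfl⟩ := hy
          exact hmov a ha b hb i (lt_of_le_of_ne hle hxy)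
        set L : Set P := (fun a => η (t a)) '' ↑s with hL
        have hchain : IsChain (· ≤ ·) L := by
          rintro x ⟨a, ha, rfl⟩ y ⟨b, hb, rfl⟩ hxy
          exact h3 a ha b hb
        have hsub : L ⊆ η '' {f | ∀ i, f i ∈ A i} := by
          rintro x ⟨a, ha, rfl⟩
          exact ⟨t a, fun i => ⟨a, ha, rfl⟩, rfl⟩
        obtain ⟨hLfin, hLcard⟩ := hc A hanti L hchain hsub
        have hLcard' : L.ncard = s.card := by
          rw [hL, Set.ncard_image_of_injOn, Set.ncard_coe_finset]
          intro x hx y hy h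
          exact hinj x hx y hy h
        omega
  exact main (∑ a ∈ s, φ (η ((fun a => η.symm a) a))) (fun a => η.symm a)
    (fun a ha i => sameComp_refl _)
    (by intro a ha b hb; rw [η.apply_symm_apply, η.apply_symm_apply]; exact hcomp a ha b hb)
    (fun a ha i => ⟨a, ha, rfl⟩)
    le_rfl

end Aux

section Aux2

variable {n : ℕ} {P : Type u} [PartialOrder P] {B : Fin n → Type u}
  [∀ i, PartialOrder (B i)] (η : (∀ i, B i) ≃ P)

/-- class of an element -/
def mkc (p : P) : Quotient (sfSetoid η) := Quotient.mk (sfSetoid η) p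

/-- classes represented weakly above `p` -/
def Tset (p : P) : Set (Quotient (sfSetoid η)) := {K | ∃ x, p ≤ x ∧ mkc η x = K}

/-- survival segment of class `K` above `p` -/
def Sset (p : P) (K : Quotient (sfSetoid η)) : Set P :=
  {r | p ≤ r ∧ ∃ x, r ≤ x ∧ mkc η x = K}

/-- the auxiliary linear order on classes above `p` -/
def Prec (p : P) (K K' : Quotient (sfSetoid η)) : Prop :=
  K ≠ K' ∧ (Sset η p K ⊂ Sset η p K' ∨ (Sset η p K = Sset η p K' ∧ WellOrderingRel K K'))

/-- classes strictly `Prec`-above the class of `p` -/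
def Aset (p : P) : Set (Quotient (sfSetoid η)) :=
  {K | K ∈ Tset η p ∧ Prec η p (mkc η p) K}

lemma mem_Sset_down {p r r' : P} {K} (hrr' : r ≤ r') (hr' : r' ∈ Sset η p K)
    (hpr : p ≤ r) : r ∈ Sset η p K := by
  obtain ⟨_, x, hx, hxK⟩ := hr'
  exact ⟨hpr, x, hrr'.trans hx, hxK⟩

lemma mem_T_self (p : P) : mkc η p ∈ Tset η p := ⟨p, le_rfl, rfl⟩

lemma q_mem_Sset_iff {p q : P} (hpq : p ≤ q) {K} :
    q ∈ Sset η p K ↔ K ∈ Tset η q := by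
  constructor
  · rintro ⟨_, x, hx, hxK⟩; exact ⟨x, hx, hxK⟩
  · rintro ⟨x, hx, hxK⟩; exact ⟨hpq, x, hx, hxK⟩

lemma Sset_total (hP : UpwardsLinear P) (p : P) (K K' : Quotient (sfSetoid η)) :
    Sset η p K ⊆ Sset η p K' ∨ Sset η p K' ⊆ Sset η p K := by
  by_cases h : Sset η p K ⊆ Sset η p K'
  · exact Or.inl h
  · refine Or.inr ?_
    rw [Set.not_subset] at h
    obtain ⟨r, hrK, hrK'⟩ := h
    intro r' hr'
    rcases comp_above hP hrK.1 hr'.1 with hle | hle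
    · exact absurd (mem_Sset_down η hle hr' hrK.1) hrK'
    · exact mem_Sset_down η hle hrK hr'.1

lemma Srestrict {p q : P} (hpq : p ≤ q) (K : Quotient (sfSetoid η)) :
    Sset η q K = Sset η p K ∩ {r | q ≤ r} := by
  ext r
  constructor
  · rintro ⟨hqr, x, hx, hxK⟩
    exact ⟨⟨hpq.trans hqr, x, hx, hxK⟩, hqr⟩
  · rintro ⟨⟨_, x, hx, hxK⟩, hqr⟩
    exact ⟨hqr, x, hx, hxK⟩

lemma restrict_eq {p q : P} (hpq : p ≤ q) {K K'}
    (h : Sset η p K = Sset η p K') : Sset η q K = Sset η q K' := by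
  rw [Srestrict η hpq, Srestrict η hpq, h]

lemma restrict_ssub (hP : UpwardsLinear P) {p q : P} (hpq : p ≤ q) {K K'}
    (hKq : K ∈ Tset η q) (h : Sset η p K ⊂ Sset η p K') :
    Sset η q K ⊂ Sset η q K' := by
  have hq : q ∈ Sset η p K := (q_mem_Sset_iff η hpq).mpr hKq
  constructor
  · rw [Srestrict η hpq, Srestrict η hpq]
    exact Set.inter_subset_inter_left _ h.1
  · intro hsub
    obtain ⟨r, hrK', hrK⟩ := Set.exists_of_ssubset h
    have hqr : q ≤ r := by
      rcases comp_above hP hq.1 hrK'.1 with hle | hle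
      · exact hle
      · exact absurd (mem_Sset_down η hle hq hrK'.1) hrK
    have hr' : r ∈ Sset η q K' := by
      rw [Srestrict η hpq]; exact ⟨hrK', hqr⟩
    have := hsub hr'
    rw [Srestrict η hpq] at this
    exact hrK this.1

lemma Prec_trans {p : P} {K K' K'' : Quotient (sfSetoid η)}
    (h1 : Prec η p K K') (h2 : Prec η p K' K'') : Prec η p K K'' := by
  obtain ⟨hne1, h1⟩ := h1
  obtain ⟨hne2, h2⟩ := h2
  rcases h1 with h1 | ⟨he1, hw1⟩ <;> rcases h2 with h2 | ⟨he2, hw2⟩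
  · refine ⟨?_, Or.inl (h1.trans h2)⟩
    rintro rfl
    exact (h1.trans h2).ne rfl
  · refine ⟨?_, Or.inl (he2 ▸ h1)⟩
    rintro rfl
    exact (he2 ▸ h1 : Sset η p K ⊂ Sset η p K).ne rfl
  · refine ⟨?_, Or.inl (he1 ▸ h2)⟩
    rintro rfl
    exact (he1 ▸ h2 : Sset η p K ⊂ Sset η p K).ne rfl
  · refine ⟨?_, Or.inr ⟨he1.trans he2, _root_.trans hw1 hw2⟩⟩
    rintro rfl
    exact irrefl K (_root_.trans hw1 hw2)

lemma Prec_asymm {p : P} {K K' : Quotient (sfSetoid η)}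
    (h : Prec η p K K') : ¬ Prec η p K' K := by
  intro h'
  exact (Prec_trans η h h').1 rfl

lemma Prec_total (hP : UpwardsLinear P) (p : P) {K K' : Quotient (sfSetoid η)}
    (hne : K ≠ K') : Prec η p K K' ∨ Prec η p K' K := by
  rcases Sset_total η hP p K K' with h | h
  · by_cases he : Sset η p K = Sset η p K'
    · rcases trichotomous (r := WellOrderingRel) K K' with hw | hw | hw
      · exact Or.inl ⟨hne, Or.inr ⟨he, hw⟩⟩
      · exact absurd hw hne
      · exact Or.inr ⟨hne.symm, Or.inr ⟨he.symm, hw⟩⟩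
    · exact Or.inl ⟨hne, Or.inl ⟨h, fun h' => he (le_antisymm h h')⟩⟩
  · by_cases he : Sset η p K' = Sset η p K
    · rcases trichotomous (r := WellOrderingRel) K K' with hw | hw | hw
      · exact Or.inl ⟨hne, Or.inr ⟨he.symm, hw⟩⟩
      · exact absurd hw hne
      · exact Or.inr ⟨hne.symm, Or.inr ⟨he, hw⟩⟩
    · exact Or.inr ⟨hne.symm, Or.inl ⟨h, fun h' => he (le_antisymm h h')⟩⟩

lemma Prec_restrict (hP : UpwardsLinear P) {p q : P} (hpq : p ≤ q)
    {K K' : Quotient (sfSetoid η)} (hKq : K ∈ Tset η q)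
    (h : Prec η p K K') : Prec η q K K' := by
  obtain ⟨hne, h⟩ := h
  rcases h with h | ⟨he, hw⟩
  · exact ⟨hne, Or.inl (restrict_ssub η hP hpq hKq h)⟩
  · exact ⟨hne, Or.inr ⟨restrict_eq η hpq he, hw⟩⟩

lemma Prec_unrestrict (hP : UpwardsLinear P) {p q : P} (hpq : p ≤ q)
    {K K' : Quotient (sfSetoid η)} (hKq : K ∈ Tset η q) (hK'q : K' ∈ Tset η q)
    (h : Prec η q K K') : Prec η p K K' := by
  rcases Prec_total η hP p h.1 with h' | h'
  · exact h'
  · exact absurd (Prec_restrict η hP hpq hK'q h') (Prec_asymm η h)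

lemma Tset_mono {p q : P} (hpq : p ≤ q) : Tset η q ⊆ Tset η p := by
  rintro K ⟨x, hx, hxK⟩
  exact ⟨x, hpq.trans hx, hxK⟩

lemma Tset_up {p q : P} (hpq : p ≤ q) {K K' : Quotient (sfSetoid η)}
    (hKq : K ∈ Tset η q) (h : Prec η p K K') : K' ∈ Tset η q := by
  have hq : q ∈ Sset η p K := (q_mem_Sset_iff η hpq).mpr hKq
  have hsub : Sset η p K ⊆ Sset η p K' := by
    rcases h.2 with h' | ⟨he, _⟩
    · exact h'.1
    · exact he.le
  exact (q_mem_Sset_iff η hpq).mp (hsub hq)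

end Aux2

section Aux3

variable {n : ℕ} {P : Type u} [PartialOrder P] {B : Fin n → Type u}
  [∀ i, PartialOrder (B i)] (η : (∀ i, B i) ≃ P)

lemma Tset_finite (hP : UpwardsLinear P) (hbox : IsBoxAugmentation P B η) {c : ℕ}
    (hc : ∀ A : ∀ i, Set (B i), (∀ i, IsAntichain (· ≤ ·) (A i)) →
      ∀ L : Set P, IsChain (· ≤ ·) L → L ⊆ η '' {f | ∀ i, f i ∈ A i} →
        L.Finite ∧ L.ncard < c) (p : P) :
    (Tset η p).Finite ∧ (Tset η p).ncard < c := by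
  classical
  have key : ∀ u : Finset (Quotient (sfSetoid η)), ↑u ⊆ Tset η p → u.card < c := by
    intro u hu
    set rep : Quotient (sfSetoid η) → P :=
      fun K => if h : K ∈ Tset η p then h.choose else p with hrep
    have hrep_le : ∀ K ∈ Tset η p, p ≤ rep K := by
      intro K hK
      rw [hrep]
      simp only [dif_pos hK]
      exact hK.choose_spec.1
    have hrep_mk : ∀ K ∈ Tset η p, mkc η (rep K) = K := by
      intro K hK
      rw [hrep]
      simp only [dif_pos hK]
      exact hK.choose_spec.2
    set s : Finset P := u.image rep with hs
    have hcard : s.card = u.card := by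
      rw [hs]
      apply Finset.card_image_of_injOn
      intro K hK K' hK' h
      rw [← hrep_mk K (hu hK), ← hrep_mk K' (hu hK'), h]
    have hscomp : ∀ a ∈ s, ∀ b ∈ s, a ≤ b ∨ b ≤ a := by
      intro a ha b hb
      rw [hs, Finset.mem_image] at ha hb
      obtain ⟨K, hK, rfl⟩ := ha
      obtain ⟨K', hK', rfl⟩ := hb
      exact comp_above hP (hrep_le K (hu hK)) (hrep_le K' (hu hK'))
    have hsne : ∀ a ∈ s, ∀ b ∈ s, a ≠ b → ¬ sfRel η a b := by
      intro a ha b hb hab hrel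
      rw [hs, Finset.mem_image] at ha hb
      obtain ⟨K, hK, rfl⟩ := ha
      obtain ⟨K', hK', rfl⟩ := hb
      apply hab
      have : K = K' := by
        rw [← hrep_mk K (hu hK), ← hrep_mk K' (hu hK')]
        exact Quotient.sound hrel
      rw [this]
    have := clique_lemma η hP hbox hc s hscomp hsne
    omega
  have hfin : (Tset η p).Finite := by
    by_contra hinf
    have hinf' : (Tset η p).Infinite := hinf
    obtain ⟨u, hu, hcard⟩ := hinf'.exists_subset_card_eq c
    have := key u hu
    omega
  refine ⟨hfin, ?_⟩
  have := key hfin.toFinset (by rw [Set.Finite.coe_toFinset])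
  rwa [Set.ncard_eq_toFinset_card _ hfin]

end Aux3

end AuxAll

section Aux4

variable {n : ℕ} {P : Type u} [PartialOrder P] {B : Fin n → Type u}
  [∀ i, PartialOrder (B i)] (η : (∀ i, B i) ≃ P)

lemma mkc_self_not_mem_Aset (p : P) : mkc η p ∉ Aset η p := by
  rintro ⟨_, hpr⟩
  exact hpr.1 rfl

lemma Aset_subset_Tset (p : P) : Aset η p ⊆ Tset η p := fun K hK => hK.1

/-- If `p ≤ q` and `p ≡ q` then `Aset p = Aset q`. -/
lemma Aset_eq_of_rel (hP : UpwardsLinear P) {p q : P} (hpq : p ≤ q)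
    (hrel : sfRel η p q) : Aset η p = Aset η q := by
  have hmk : mkc η p = mkc η q := Quotient.sound hrel
  ext K
  constructor
  · rintro ⟨hKT, hprec⟩
    rw [hmk] at hprec
    have hKq : K ∈ Tset η q := Tset_up η hpq (mem_T_self η q) hprec
    exact ⟨hKq, Prec_restrict η hP hpq (mem_T_self η q) hprec⟩
  · rintro ⟨hKT, hprec⟩
    refine ⟨Tset_mono η hpq hKT, ?_⟩
    rw [hmk]
    exact Prec_unrestrict η hP hpq (mem_T_self η q) hKT hprec

/-- If `p ≤ q` and `¬ p ≡ q` then the counts differ. -/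
lemma Aset_ncard_ne (hP : UpwardsLinear P) (hbox : IsBoxAugmentation P B η) {c : ℕ}
    (hc : ∀ A : ∀ i, Set (B i), (∀ i, IsAntichain (· ≤ ·) (A i)) →
      ∀ L : Set P, IsChain (· ≤ ·) L → L ⊆ η '' {f | ∀ i, f i ∈ A i} →
        L.Finite ∧ L.ncard < c)
    {p q : P} (hpq : p ≤ q) (hrel : ¬ sfRel η p q) :
    (Aset η p).ncard ≠ (Aset η q).ncard := by
  have hmkne : mkc η p ≠ mkc η q := fun h => hrel (Quotient.exact h)
  have hfinp : (Aset η p).Finite :=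
    Set.Finite.subset (Tset_finite η hP hbox hc p).1 (Aset_subset_Tset η p)
  have hfinq : (Aset η q).Finite :=
    Set.Finite.subset (Tset_finite η hP hbox hc q).1 (Aset_subset_Tset η q)
  have hqTp : mkc η q ∈ Tset η p := ⟨q, hpq, rfl⟩
  rcases Prec_total η hP p hmkne with hl | hr
  · -- Aset q ⊊ Aset p
    have hsub : Aset η q ⊆ Aset η p := by
      rintro K ⟨hKTq, hprec⟩
      refine ⟨Tset_mono η hpq hKTq, ?_⟩
      exact Prec_trans η hl
        (Prec_unrestrict η hP hpq (mem_T_self η q) hKTq hprec)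
    have hqA : mkc η q ∈ Aset η p := ⟨hqTp, hl⟩
    have : (Aset η q).ncard < (Aset η p).ncard := by
      apply Set.ncard_lt_ncard _ hfinp
      exact ⟨hsub, fun h => mkc_self_not_mem_Aset η q (h hqA)⟩
    omega
  · -- Aset p ⊊ Aset q
    have hpTq : mkc η p ∈ Tset η q := Tset_up η hpq (mem_T_self η q) hr
    have hsub : Aset η p ⊆ Aset η q := by
      rintro K ⟨hKTp, hprec⟩
      have hprec' : Prec η p (mkc η q) K := Prec_trans η hr hprec
      have hKTq : K ∈ Tset η q := Tset_up η hpq (mem_T_self η q) hprec'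
      exact ⟨hKTq, Prec_restrict η hP hpq (mem_T_self η q) hprec'⟩
    have hpA : mkc η p ∈ Aset η q :=
      ⟨hpTq, Prec_restrict η hP hpq (mem_T_self η q) hr⟩
    have : (Aset η p).ncard < (Aset η q).ncard := by
      apply Set.ncard_lt_ncard _ hfinq
      exact ⟨hsub, fun h => mkc_self_not_mem_Aset η p (h hpA)⟩
    omega

end Aux4

/-- Let `P` be a countable wulpo which is a tamely colorable box-augmentation of
`(B 0, …, B (n-1))` via `η` and let `c` bound the length of chains contained in images of
antichains. Then there is a coloring `μ : P → {1, …, c}` such that on every chain `L ⊆ P`,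
two elements receive the same color iff they are same-factor equivalent. -/
theorem exists_coloring_of_tamelyColorable {n : ℕ} {P : Type u} [PartialOrder P]
    [WellFoundedLT P] [Countable P] (B : Fin n → Type u) [∀ i, PartialOrder (B i)]
    (hP : UpwardsLinear P)
    (η : (∀ i, B i) ≃ P) (hbox : IsBoxAugmentation P B η)
    (htame : TamelyColorable P B η) (c : ℕ)
    (hc : ∀ A : ∀ i, Set (B i), (∀ i, IsAntichain (· ≤ ·) (A i)) →
      ∀ L : Set P, IsChain (· ≤ ·) L → L ⊆ η '' {f | ∀ i, f i ∈ A i} →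
        L.Finite ∧ L.ncard < c) :
    ∃ μ : P → Fin c, ∀ L : Set P, IsChain (· ≤ ·) L → ∀ p ∈ L, ∀ p' ∈ L,
      (μ p = μ p' ↔ ∀ i, SameComp (η.symm p i) (η.symm p' i)) := by
  classical
  have hbound : ∀ p : P, (Aset η p).ncard < c := by
    intro p
    obtain ⟨hfin, hlt⟩ := Tset_finite η hP hbox hc p
    have : (Aset η p).ncard < (Tset η p).ncard := by
      apply Set.ncard_lt_ncard _ hfin
      exact ⟨Aset_subset_Tset η p,
        fun h => mkc_self_not_mem_Aset η p (h (mem_T_self η p))⟩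
    omega
  refine ⟨fun p => ⟨(Aset η p).ncard, hbound p⟩, ?_⟩
  intro L hL p hp p' hp'
  by_cases hpp : p = p'
  · subst hpp
    exact ⟨fun _ i => sameComp_refl _, fun _ => rfl⟩
  · have hcomp : p ≤ p' ∨ p' ≤ p := hL.total hp hp'
    have key : ∀ x y : P, x ≤ y →
        ((Aset η x).ncard = (Aset η y).ncard ↔ sfRel η x y) := by
      intro x y hxy
      constructor
      · intro h
        by_contra hrel
        exact Aset_ncard_ne η hP hbox hc hxy hrel h
      · intro hrel
        rw [Aset_eq_of_rel η hP hxy hrel]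
    have hfin_iff : (⟨(Aset η p).ncard, hbound p⟩ : Fin c) = ⟨(Aset η p').ncard, hbound p'⟩
        ↔ (Aset η p).ncard = (Aset η p').ncard := by
      constructor
      · intro h; exact congrArg Fin.val h
      · intro h; exact Fin.ext h
    rw [hfin_iff]
    rcases hcomp with h | h
    · exact key p p' h
    · constructor
      · intro heq
        exact fun i => sameComp_symm (((key p' p h).mp heq.symm) i)
      · intro hrel
        exact ((key p' p h).mpr (fun i => sameComp_symm (hrel i))).symm
end
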